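/- A signed graph (G,σ) is balanced (every circuit of G has positive sign product) if and only if the vertex set V(G) can be partitioned into two (possibly empty) sets A and B such that every edge with both endpoints in A or both endpoints in B is positive, and every edge with one endpoint in A and one in B is negative. -/
import Mathlib


open SimpleGraph

private lemma sq_one (a : ℤˣ) : a * a = 1 := Int.units_mul_self a

/-- Splitting a walk whose start reappears in the tail of its support into a
nontrivial closed walk followed by the rest. -/
private lemma split_at_tail {V : Type*} [DecidableEq V] {G : SimpleGraph V} {x u : V}
    (σ : Sym2 V → ℤˣ) (q : G.Walk x u) (hx : x ∈ q.support.tail) :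
    ∃ (c : G.Walk x x) (d : G.Walk x u), 1 ≤ c.length ∧
      c.length + d.length = q.length ∧
      (q.edges.map σ).prod = (c.edges.map σ).prod * (d.edges.map σ).prod := by
  cases q with
  | nil => simp at hx
  | @cons _ y _ h2 q3 =>
      rw [SimpleGraph.Walk.support_cons, List.tail_cons] at hx
      refine ⟨Walk.cons h2 (q3.takeUntil x hx), q3.dropUntil x hx, by simp, ?_, ?_⟩
      · have := congrArg Walk.length (q3.take_spec hx)
        rw [Walk.length_append] at this
        simp only [Walk.length_cons]
        omega
      · have hed := congrArg Walk.edges (q3.take_spec hx)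
        rw [Walk.edges_append] at hed
        rw [Walk.edges_cons, Walk.edges_cons, ← hed]
        simp [List.prod_append, mul_assoc]

/-- In a balanced signed graph, every closed walk has sign product `1`. -/
private lemma closed_walk_prod {V : Type*} {G : SimpleGraph V} (σ : Sym2 V → ℤˣ)
    (hbal : ∀ (u : V) (w : G.Walk u u), w.IsCycle → (w.edges.map σ).prod = 1) :
    ∀ (n : ℕ) (u : V) (w : G.Walk u u), w.length ≤ n → (w.edges.map σ).prod = 1 := by
  intro n
  induction n using Nat.strong_induction_on with
  | _ n ih =>
    intro u w hlen
    cases w with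
    | nil => simp
    | @cons _ v _ h p =>
      by_cases hp : p.IsPath
      · by_cases he : s(u, v) ∈ p.edges
        · -- p is a path from v to u containing the edge s(u,v); then p is that single edge
          cases p with
          | nil => simp at he
          | @cons _ y _ h' q =>
              rw [Walk.edges_cons, List.mem_cons] at he
              rcases he with he | he
              · have hy : u = y := by
                  rw [Sym2.eq_iff] at he
                  rcases he with ⟨h1, h2⟩ | ⟨h1, h2⟩
                  · exact absurd h1 h.ne
                  · exact h1
                subst hy
                have hqnil : q = Walk.nil := by
                  cases q with
                  | nil => rfl
                  | cons h'' q' =>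
                      exfalso
                      rw [Walk.cons_isPath_iff, Walk.isPath_def, Walk.support_cons,
                        List.nodup_cons] at hp
                      exact hp.1.1 (Walk.end_mem_support _)
                subst hqnil
                simp only [Walk.edges_cons, Walk.edges_nil, List.map_cons, List.map_nil,
                  List.prod_cons, List.prod_nil, mul_one]
                rw [show s(v, u) = s(u, v) from Sym2.eq_swap]
                exact sq_one _
              · exfalso
                rw [Walk.cons_isPath_iff] at hp
                exact hp.2 (Walk.snd_mem_support_of_mem_edges q he)
        · -- it's a cycle
          exact hbal u (Walk.cons h p) ((Walk.cons_isCycle_iff p h).mpr ⟨hp, he⟩)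
      · -- p has a repeated vertex; split off a shorter closed walk
        classical
        rw [Walk.isPath_def] at hp
        rw [Walk.length_cons] at hlen
        obtain ⟨x, hxdup⟩ := List.exists_duplicate_iff_not_nodup.mpr hp
        classical
        have hcount : 2 ≤ p.support.count x := List.duplicate_iff_two_le_count.mp hxdup
        have hx : x ∈ p.support := hxdup.mem
        have hspec := p.take_spec hx
        have hcount1 := p.count_support_takeUntil_eq_one hx
        have hxtail : x ∈ (p.dropUntil x hx).support.tail := by
          by_contra hxm
          rw [← hspec, Walk.support_append, List.count_append, hcount1,
            List.count_eq_zero_of_not_mem hxm] at hcount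
          omega
        obtain ⟨c, d, hc1, hcd, hedges⟩ := split_at_tail σ (p.dropUntil x hx) hxtail
        have hlen' := congrArg Walk.length hspec
        rw [Walk.length_append] at hlen'
        have hlt : Walk.length (p.takeUntil x hx) + (c.length + d.length) = p.length := by
          rw [hcd]; omega
        -- recursive products
        have hcprod : (c.edges.map σ).prod = 1 := by
          refine ih c.length ?_ x c le_rfl
          omega
        set w' : G.Walk u u := Walk.cons h ((p.takeUntil x hx).append d) with hw'
        have hw'len : w'.length = (p.takeUntil x hx).length + d.length + 1 := by
          simp [hw', Walk.length_cons, Walk.length_append]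
        have hw'prod : (w'.edges.map σ).prod = 1 := by
          refine ih w'.length ?_ u w' le_rfl
          omega
        -- combine
        have hpprod : (p.edges.map σ).prod =
            ((p.takeUntil x hx).edges.map σ).prod *
              ((c.edges.map σ).prod * (d.edges.map σ).prod) := by
          conv_lhs => rw [← hspec]
          rw [Walk.edges_append, List.map_append, List.prod_append, hedges]
        have hw'prodeq : (w'.edges.map σ).prod =
            σ s(u, v) * (((p.takeUntil x hx).edges.map σ).prod * (d.edges.map σ).prod) := by
          rw [hw']
          simp [Walk.edges_cons, Walk.edges_append, List.prod_append]
        rw [Walk.edges_cons, List.map_cons, List.prod_cons, hpprod]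
        have hAC : σ s(u, v) * (((p.takeUntil x hx).edges.map σ).prod *
              ((c.edges.map σ).prod * (d.edges.map σ).prod)) =
            (σ s(u, v) * (((p.takeUntil x hx).edges.map σ).prod * (d.edges.map σ).prod)) *
              (c.edges.map σ).prod := by
          simp [mul_assoc, mul_comm, mul_left_comm]
        rw [hAC, ← hw'prodeq, hw'prod, hcprod, one_mul]

/-- A signed graph `(G, σ)` is *balanced* if every circuit (cycle) has positive
sign product. It is balanced iff the vertex set can be partitioned into two
(possibly empty) sets `A` and `B = Aᶜ` such that edges within `A` or within `B`
are positive and edges between `A` and `B` are negative. -/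
theorem balanced_iff_partition {V : Type*} [Fintype V] (G : SimpleGraph V)
    (σ : Sym2 V → ℤˣ) :
    (∀ (u : V) (w : G.Walk u u), w.IsCycle → (w.edges.map σ).prod = 1) ↔
      ∃ A : Set V, ∀ u v : V, G.Adj u v →
        (((u ∈ A ↔ v ∈ A) → σ s(u, v) = 1) ∧ (¬(u ∈ A ↔ v ∈ A) → σ s(u, v) = -1)) := by
  classical
  constructor
  · intro hbal
    have hclosed : ∀ (u : V) (w : G.Walk u u), (w.edges.map σ).prod = 1 :=
      fun u w => closed_walk_prod σ hbal w.length u w le_rfl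
    -- root of each component
    set r : V → V := fun v => (G.connectedComponentMk v).out with hr
    have hreach : ∀ v, G.Reachable (r v) v := fun v =>
      ConnectedComponent.exact ((G.connectedComponentMk v).out_eq)
    have hW : ∀ v, Nonempty (G.Walk (r v) v) := fun v => hreach v
    set W : ∀ v, G.Walk (r v) v := fun v => (hW v).some with hWdef
    set f : V → ℤˣ := fun v => ((W v).edges.map σ).prod with hf
    have hkey : ∀ u v : V, G.Adj u v → σ s(u, v) = f u * f v := by
      intro u v huv
      have hru : r u = r v := by
        simp only [hr]
        rw [ConnectedComponent.connectedComponentMk_eq_of_adj huv]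
      set w2 : G.Walk (r u) v := (W v).copy hru.symm rfl with hw2
      set C : G.Walk (r u) (r u) := (W u).append (Walk.cons huv w2.reverse) with hC
      have hCprod := hclosed (r u) C
      rw [hC, Walk.edges_append, Walk.edges_cons, Walk.edges_reverse] at hCprod
      rw [List.map_append, List.prod_append, List.map_cons, List.prod_cons] at hCprod
      have hrev : ((w2.edges.reverse).map σ).prod = f v := by
        rw [List.map_reverse, List.prod_reverse, hw2, Walk.edges_copy]
      rw [hrev] at hCprod
      -- hCprod : f u * (σ s(u,v) * f v) = 1
      have h2 : (f u)⁻¹ = σ s(u, v) * f v := inv_eq_of_mul_eq_one_right hCprod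
      have h3 : σ s(u, v) = (f u)⁻¹ * (f v)⁻¹ := by
        rw [h2, mul_assoc, mul_inv_cancel, mul_one]
      rw [Int.units_inv_eq_self, Int.units_inv_eq_self] at h3
      exact h3
    refine ⟨{v | f v = 1}, ?_⟩
    intro u v huv
    have hσ := hkey u v huv
    simp only [Set.mem_setOf_eq]
    rcases Int.units_eq_one_or (f u) with hu | hu <;>
      rcases Int.units_eq_one_or (f v) with hv | hv <;>
      rw [hu, hv] at hσ ⊢ <;>
      constructor <;> intro hiff <;> simp_all
  · rintro ⟨A, hA⟩ u w _
    set χ : V → ℤˣ := fun v => if v ∈ A then 1 else -1 with hχ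
    have hedge : ∀ a b : V, G.Adj a b → σ s(a, b) = χ a * χ b := by
      intro a b hab
      obtain ⟨hpos, hneg⟩ := hA a b hab
      by_cases ha : a ∈ A <;> by_cases hb : b ∈ A
      · rw [hpos (by tauto)]; simp [hχ, ha, hb]
      · rw [hneg (by tauto)]; simp [hχ, ha, hb]
      · rw [hneg (by tauto)]; simp [hχ, ha, hb]
      · rw [hpos (by tauto)]; simp [hχ, ha, hb]
    have hwalk : ∀ {a b : V} (p : G.Walk a b), (p.edges.map σ).prod = χ a * χ b := by
      intro a b p
      induction p with
      | nil => simp [sq_one]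
      | @cons a c b hadj q ihq =>
          rw [Walk.edges_cons, List.map_cons, List.prod_cons, ihq, hedge a c hadj,
            mul_assoc, ← mul_assoc (χ c), sq_one, one_mul]
    rw [hwalk w, sq_one]
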